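/- Let V be a real vector space of finite dimension 4 and let e₁, e₂, e₃ ∈ V be linearly independent. The linear map ⋀²V × ⋀²V × ⋀²V → ⋀³V × ⋀³V × ⋀³V defined by (X₁, X₂, X₃) ↦ (e₁∧X₂ − e₂∧X₁, e₁∧X₃ − e₃∧X₁, e₂∧X₃ − e₃∧X₂) is surjective. (This is the pointwise statement that the boundary map W_{∂}^{(1,2)} is surjective.) -/

import Mathlib

open ExteriorAlgebra

variable {V : Type*} [AddCommGroup V] [Module ℝ V]

theorem mem_ext2 (a b : V) : ι ℝ a * ι ℝ b ∈ ⋀[ℝ]^2 V := by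
  show _ ∈ LinearMap.range (ι ℝ (M := V)) ^ 2
  rw [sq]
  exact Submodule.mul_mem_mul (LinearMap.mem_range_self _ _) (LinearMap.mem_range_self _ _)

theorem mem_ext3 (a : V) {x : ExteriorAlgebra ℝ V} (hx : x ∈ ⋀[ℝ]^2 V) :
    ι ℝ a * x ∈ ⋀[ℝ]^3 V := by
  show _ ∈ LinearMap.range (ι ℝ (M := V)) ^ 3
  rw [pow_succ']
  exact Submodule.mul_mem_mul (LinearMap.mem_range_self _ _) hx

theorem span_ext3 (f : Fin 4 → V) (hf : Submodule.span ℝ (Set.range f) = ⊤) :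
    (⋀[ℝ]^3 V : Submodule ℝ (ExteriorAlgebra ℝ V)) ≤
      Submodule.span ℝ {w | ∃ i j k : Fin 4, w = ι ℝ (f i) * ι ℝ (f j) * ι ℝ (f k)} := by
  have hr : LinearMap.range (ι ℝ (M := V)) = Submodule.span ℝ (ι ℝ '' Set.range f) := by
    rw [← Submodule.map_span, hf, Submodule.map_top]
  show LinearMap.range (ι ℝ (M := V)) ^ 3 ≤ _
  rw [hr, pow_succ, sq, Submodule.span_mul_span, Submodule.span_mul_span]
  apply Submodule.span_le.2
  rintro w ⟨u, ⟨x, ⟨_, ⟨i, rfl⟩, rfl⟩, y, ⟨_, ⟨j, rfl⟩, rfl⟩, rfl⟩, z, ⟨_, ⟨k, rfl⟩, rfl⟩, rfl⟩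
  exact Submodule.subset_span ⟨i, j, k, rfl⟩

theorem ι_swap (x y : V) : ι ℝ y * ι ℝ x = -(ι ℝ x * ι ℝ y) := by
  have := ι_add_mul_swap (R := ℝ) x y
  linear_combination (norm := noncomm_ring) this

theorem ι_swap' (x y : V) (w : ExteriorAlgebra ℝ V) :
    ι ℝ y * (ι ℝ x * w) = -(ι ℝ x * (ι ℝ y * w)) := by
  rw [← mul_assoc, ι_swap x y, neg_mul, mul_assoc]

theorem ι_sq' (x : V) (w : ExteriorAlgebra ℝ V) : ι ℝ x * (ι ℝ x * w) = 0 := by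
  rw [← mul_assoc, ι_sq_zero, zero_mul]

/-- The pointwise boundary map `W_{∂}^{(1,2)} : (⋀²V)³ → (⋀³V)³`,
`(X₁,X₂,X₃) ↦ (e₁∧X₂ − e₂∧X₁, e₁∧X₃ − e₃∧X₁, e₂∧X₃ − e₃∧X₂)`
(valued in the exterior algebra). -/
noncomputable def Wb12 (e₁ e₂ e₃ : V) :
    (⋀[ℝ]^2 V) × (⋀[ℝ]^2 V) × (⋀[ℝ]^2 V) →ₗ[ℝ]
      ExteriorAlgebra ℝ V × ExteriorAlgebra ℝ V × ExteriorAlgebra ℝ V :=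
  let p₁ : (⋀[ℝ]^2 V) × (⋀[ℝ]^2 V) × (⋀[ℝ]^2 V) →ₗ[ℝ] ExteriorAlgebra ℝ V :=
    (⋀[ℝ]^2 V).subtype.comp (LinearMap.fst ℝ (⋀[ℝ]^2 V) ((⋀[ℝ]^2 V) × (⋀[ℝ]^2 V)))
  let p₂ : (⋀[ℝ]^2 V) × (⋀[ℝ]^2 V) × (⋀[ℝ]^2 V) →ₗ[ℝ] ExteriorAlgebra ℝ V :=
    (⋀[ℝ]^2 V).subtype.comp ((LinearMap.fst ℝ (⋀[ℝ]^2 V) (⋀[ℝ]^2 V)).comp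
      (LinearMap.snd ℝ (⋀[ℝ]^2 V) ((⋀[ℝ]^2 V) × (⋀[ℝ]^2 V))))
  let p₃ : (⋀[ℝ]^2 V) × (⋀[ℝ]^2 V) × (⋀[ℝ]^2 V) →ₗ[ℝ] ExteriorAlgebra ℝ V :=
    (⋀[ℝ]^2 V).subtype.comp ((LinearMap.snd ℝ (⋀[ℝ]^2 V) (⋀[ℝ]^2 V)).comp
      (LinearMap.snd ℝ (⋀[ℝ]^2 V) ((⋀[ℝ]^2 V) × (⋀[ℝ]^2 V))))
  ((LinearMap.mulLeft ℝ (ι ℝ e₁)).comp p₂ - (LinearMap.mulLeft ℝ (ι ℝ e₂)).comp p₁).prod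
    (((LinearMap.mulLeft ℝ (ι ℝ e₁)).comp p₃ - (LinearMap.mulLeft ℝ (ι ℝ e₃)).comp p₁).prod
      ((LinearMap.mulLeft ℝ (ι ℝ e₂)).comp p₃ - (LinearMap.mulLeft ℝ (ι ℝ e₃)).comp p₂))

theorem Wb12_apply' (e₁ e₂ e₃ : V) (X : (⋀[ℝ]^2 V) × (⋀[ℝ]^2 V) × (⋀[ℝ]^2 V)) :
    Wb12 e₁ e₂ e₃ X =
      (ι ℝ e₁ * (X.2.1 : ExteriorAlgebra ℝ V) - ι ℝ e₂ * (X.1 : ExteriorAlgebra ℝ V),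
       ι ℝ e₁ * (X.2.2 : ExteriorAlgebra ℝ V) - ι ℝ e₃ * (X.1 : ExteriorAlgebra ℝ V),
       ι ℝ e₂ * (X.2.2 : ExteriorAlgebra ℝ V) - ι ℝ e₃ * (X.2.1 : ExteriorAlgebra ℝ V)) := rfl

set_option maxHeartbeats 2000000 in
/-- For `V` 4-dimensional and `e₁, e₂, e₃` linearly independent, the map
`(X₁,X₂,X₃) ↦ (e₁∧X₂ − e₂∧X₁, e₁∧X₃ − e₃∧X₁, e₂∧X₃ − e₃∧X₂)` from `(⋀²V)³` is surjective
onto `(⋀³V)³`. -/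
theorem Wb12_surjective [FiniteDimensional ℝ V]
    (hdim : Module.finrank ℝ V = 4) (e₁ e₂ e₃ : V)
    (hind : LinearIndependent ℝ ![e₁, e₂, e₃]) :
    LinearMap.range (Wb12 e₁ e₂ e₃) = (⋀[ℝ]^3 V).prod ((⋀[ℝ]^3 V).prod (⋀[ℝ]^3 V)) := by
  set T := LinearMap.range (Wb12 e₁ e₂ e₃) with hT
  apply le_antisymm
  · rintro _ ⟨X, rfl⟩
    rw [Wb12_apply']
    exact ⟨Submodule.sub_mem _ (mem_ext3 _ (X.2.1).2) (mem_ext3 _ (X.1).2),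
      Submodule.sub_mem _ (mem_ext3 _ (X.2.2).2) (mem_ext3 _ (X.1).2),
      Submodule.sub_mem _ (mem_ext3 _ (X.2.2).2) (mem_ext3 _ (X.2.1).2)⟩
  obtain ⟨e₄, he₄⟩ : ∃ v, v ∉ Submodule.span ℝ (Set.range ![e₁, e₂, e₃]) := by
    by_contra h
    push_neg at h
    have htop : Submodule.span ℝ (Set.range ![e₁, e₂, e₃]) = ⊤ := eq_top_iff.2 fun v _ => h v
    have h1 := finrank_range_le_card (R := ℝ) ![e₁, e₂, e₃]
    rw [Set.finrank, htop, finrank_top, hdim] at h1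
    simp at h1
  have hspan : Submodule.span ℝ (Set.range ![e₁, e₂, e₃, e₄]) = ⊤ := by
    have hsnoc : ![e₁, e₂, e₃, e₄] = Fin.snoc ![e₁, e₂, e₃] e₄ := by
      funext i; fin_cases i <;> simp [Fin.snoc] <;> rfl
    have hli : LinearIndependent ℝ ![e₁, e₂, e₃, e₄] := by
      rw [hsnoc, linearIndependent_fin_snoc]
      exact ⟨hind, he₄⟩
    apply hli.span_eq_top_of_card_eq_finrank
    simp [hdim]
  let m : V → V → (⋀[ℝ]^2 V) := fun a b => ⟨ι ℝ a * ι ℝ b, mem_ext2 a b⟩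
  let mh : V → V → (⋀[ℝ]^2 V) := fun a b =>
    ⟨(2⁻¹ : ℝ) • (ι ℝ a * ι ℝ b), Submodule.smul_mem _ _ (mem_ext2 a b)⟩
  let mhn : V → V → (⋀[ℝ]^2 V) := fun a b =>
    ⟨(-2⁻¹ : ℝ) • (ι ℝ a * ι ℝ b), Submodule.smul_mem _ _ (mem_ext2 a b)⟩
  let mn : V → V → (⋀[ℝ]^2 V) := fun a b =>
    ⟨-(ι ℝ a * ι ℝ b), Submodule.neg_mem _ (mem_ext2 a b)⟩
  have B :
      ((ι ℝ e₁ * (ι ℝ e₂ * ι ℝ e₃), (0:ExteriorAlgebra ℝ V), (0:ExteriorAlgebra ℝ V)) ∈ T)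
    ∧ ((ι ℝ e₁ * (ι ℝ e₂ * ι ℝ e₄), (0:ExteriorAlgebra ℝ V), (0:ExteriorAlgebra ℝ V)) ∈ T)
    ∧ ((ι ℝ e₁ * (ι ℝ e₃ * ι ℝ e₄), (0:ExteriorAlgebra ℝ V), (0:ExteriorAlgebra ℝ V)) ∈ T)
    ∧ ((ι ℝ e₂ * (ι ℝ e₃ * ι ℝ e₄), (0:ExteriorAlgebra ℝ V), (0:ExteriorAlgebra ℝ V)) ∈ T)
    ∧ (((0:ExteriorAlgebra ℝ V), ι ℝ e₁ * (ι ℝ e₂ * ι ℝ e₃), (0:ExteriorAlgebra ℝ V)) ∈ T)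
    ∧ (((0:ExteriorAlgebra ℝ V), ι ℝ e₁ * (ι ℝ e₂ * ι ℝ e₄), (0:ExteriorAlgebra ℝ V)) ∈ T)
    ∧ (((0:ExteriorAlgebra ℝ V), ι ℝ e₁ * (ι ℝ e₃ * ι ℝ e₄), (0:ExteriorAlgebra ℝ V)) ∈ T)
    ∧ (((0:ExteriorAlgebra ℝ V), ι ℝ e₂ * (ι ℝ e₃ * ι ℝ e₄), (0:ExteriorAlgebra ℝ V)) ∈ T)
    ∧ (((0:ExteriorAlgebra ℝ V), (0:ExteriorAlgebra ℝ V), ι ℝ e₁ * (ι ℝ e₂ * ι ℝ e₃)) ∈ T)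
    ∧ (((0:ExteriorAlgebra ℝ V), (0:ExteriorAlgebra ℝ V), ι ℝ e₁ * (ι ℝ e₂ * ι ℝ e₄)) ∈ T)
    ∧ (((0:ExteriorAlgebra ℝ V), (0:ExteriorAlgebra ℝ V), ι ℝ e₁ * (ι ℝ e₃ * ι ℝ e₄)) ∈ T)
    ∧ (((0:ExteriorAlgebra ℝ V), (0:ExteriorAlgebra ℝ V), ι ℝ e₂ * (ι ℝ e₃ * ι ℝ e₄)) ∈ T) := by
    refine ⟨⟨(0, m e₂ e₃, 0), ?_⟩,
            ⟨(mh e₁ e₄, mh e₂ e₄, mhn e₃ e₄), ?_⟩,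
            ⟨(0, m e₃ e₄, 0), ?_⟩,
            ⟨(mn e₃ e₄, 0, 0), ?_⟩,
            ⟨(0, 0, m e₂ e₃), ?_⟩,
            ⟨(0, 0, m e₂ e₄), ?_⟩,
            ⟨(mh e₁ e₄, mhn e₂ e₄, mh e₃ e₄), ?_⟩,
            ⟨(m e₂ e₄, 0, 0), ?_⟩,
            ⟨(0, 0, mn e₁ e₃), ?_⟩,
            ⟨(0, 0, mn e₁ e₄), ?_⟩,
            ⟨(0, m e₁ e₄, 0), ?_⟩,
            ⟨(mhn e₁ e₄, mh e₂ e₄, mh e₃ e₄), ?_⟩⟩ <;>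
      rw [Wb12_apply'] <;>
      refine Prod.ext ?_ (Prod.ext ?_ ?_) <;>
        simp only [m, mh, mhn, mn, ZeroMemClass.coe_zero, mul_zero, zero_mul, mul_neg, neg_neg,
          sub_zero, zero_sub, sub_neg_eq_add, mul_smul_comm, smul_neg, neg_zero,
          ι_swap' e₁ e₂, ι_swap' e₁ e₃, ι_swap' e₁ e₄, ι_swap' e₂ e₃, ι_swap' e₂ e₄,
          ι_swap' e₃ e₄, ι_sq', ι_sq_zero] <;>
      module

  obtain ⟨B1, B2, B3, B4, B5, B6, B7, B8, B9, B10, B11, B12⟩ := B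
  have Z : ((0:ExteriorAlgebra ℝ V), (0:ExteriorAlgebra ℝ V), (0:ExteriorAlgebra ℝ V)) ∈ T :=
    T.zero_mem
  have N1 : (-(ι ℝ e₁ * (ι ℝ e₂ * ι ℝ e₃)), (0:ExteriorAlgebra ℝ V),
      (0:ExteriorAlgebra ℝ V)) ∈ T := by simpa using T.neg_mem B1
  have N2 : (-(ι ℝ e₁ * (ι ℝ e₂ * ι ℝ e₄)), (0:ExteriorAlgebra ℝ V),
      (0:ExteriorAlgebra ℝ V)) ∈ T := by simpa using T.neg_mem B2
  have N3 : (-(ι ℝ e₁ * (ι ℝ e₃ * ι ℝ e₄)), (0:ExteriorAlgebra ℝ V),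
      (0:ExteriorAlgebra ℝ V)) ∈ T := by simpa using T.neg_mem B3
  have N4 : (-(ι ℝ e₂ * (ι ℝ e₃ * ι ℝ e₄)), (0:ExteriorAlgebra ℝ V),
      (0:ExteriorAlgebra ℝ V)) ∈ T := by simpa using T.neg_mem B4
  have N5 : ((0:ExteriorAlgebra ℝ V), -(ι ℝ e₁ * (ι ℝ e₂ * ι ℝ e₃)),
      (0:ExteriorAlgebra ℝ V)) ∈ T := by simpa using T.neg_mem B5
  have N6 : ((0:ExteriorAlgebra ℝ V), -(ι ℝ e₁ * (ι ℝ e₂ * ι ℝ e₄)),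
      (0:ExteriorAlgebra ℝ V)) ∈ T := by simpa using T.neg_mem B6
  have N7 : ((0:ExteriorAlgebra ℝ V), -(ι ℝ e₁ * (ι ℝ e₃ * ι ℝ e₄)),
      (0:ExteriorAlgebra ℝ V)) ∈ T := by simpa using T.neg_mem B7
  have N8 : ((0:ExteriorAlgebra ℝ V), -(ι ℝ e₂ * (ι ℝ e₃ * ι ℝ e₄)),
      (0:ExteriorAlgebra ℝ V)) ∈ T := by simpa using T.neg_mem B8
  have N9 : ((0:ExteriorAlgebra ℝ V), (0:ExteriorAlgebra ℝ V),
      -(ι ℝ e₁ * (ι ℝ e₂ * ι ℝ e₃))) ∈ T := by simpa using T.neg_mem B9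
  have N10 : ((0:ExteriorAlgebra ℝ V), (0:ExteriorAlgebra ℝ V),
      -(ι ℝ e₁ * (ι ℝ e₂ * ι ℝ e₄))) ∈ T := by simpa using T.neg_mem B10
  have N11 : ((0:ExteriorAlgebra ℝ V), (0:ExteriorAlgebra ℝ V),
      -(ι ℝ e₁ * (ι ℝ e₃ * ι ℝ e₄))) ∈ T := by simpa using T.neg_mem B11
  have N12 : ((0:ExteriorAlgebra ℝ V), (0:ExteriorAlgebra ℝ V),
      -(ι ℝ e₂ * (ι ℝ e₃ * ι ℝ e₄))) ∈ T := by simpa using T.neg_mem B12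
  simp only [Prod.mk_zero_zero] at Z B1 B2 B3 B4 B5 B6 B7 B8 B9 B10 B11 B12 N1 N2 N3 N4 N5 N6 N7 N8 N9 N10 N11 N12
  have key : ∀ (g : ExteriorAlgebra ℝ V →ₗ[ℝ]
      ExteriorAlgebra ℝ V × ExteriorAlgebra ℝ V × ExteriorAlgebra ℝ V),
      (∀ x y z : V, x ∈ ({e₁, e₂, e₃, e₄} : Set V) → y ∈ ({e₁, e₂, e₃, e₄} : Set V) →
        z ∈ ({e₁, e₂, e₃, e₄} : Set V) → g (ι ℝ x * ι ℝ y * ι ℝ z) ∈ T) →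
      ∀ y ∈ (⋀[ℝ]^3 V : Submodule ℝ (ExteriorAlgebra ℝ V)), g y ∈ T := by
    intro g hg y hy
    have hy' := span_ext3 ![e₁,e₂,e₃,e₄] hspan hy
    have hmem : ∀ i : Fin 4, ![e₁,e₂,e₃,e₄] i ∈ ({e₁, e₂, e₃, e₄} : Set V) := by
      intro i; fin_cases i <;> simp
    have hle : Submodule.span ℝ {w | ∃ i j k : Fin 4,
        w = ι ℝ (![e₁,e₂,e₃,e₄] i) * ι ℝ (![e₁,e₂,e₃,e₄] j) * ι ℝ (![e₁,e₂,e₃,e₄] k)}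
        ≤ T.comap g := by
      rw [Submodule.span_le]
      rintro w ⟨i, j, k, rfl⟩
      exact hg _ _ _ (hmem i) (hmem j) (hmem k)
    exact hle hy'
  have w12 := ι_swap' e₁ e₂
  have w13 := ι_swap' e₁ e₃
  have w14 := ι_swap' e₁ e₄
  have w23 := ι_swap' e₂ e₃
  have w24 := ι_swap' e₂ e₄
  have w34 := ι_swap' e₃ e₄
  have s12 := ι_swap e₁ e₂
  have s13 := ι_swap e₁ e₃
  have s14 := ι_swap e₁ e₄
  have s23 := ι_swap e₂ e₃
  have s24 := ι_swap e₂ e₄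
  have s34 := ι_swap e₃ e₄
  have S1 := key (LinearMap.prod LinearMap.id (LinearMap.prod 0 0)) ?_
  rotate_left
  · rintro x y z (rfl|rfl|rfl|rfl) (rfl|rfl|rfl|rfl) (rfl|rfl|rfl|rfl) <;>
      simp [mul_assoc, mul_neg, neg_mul, neg_neg,
        w12, w13, w14, w23, w24,
        w34, ι_sq', ι_sq_zero, s12, s13, s14,
        s23, s24, s34, B1, B2, B3, B4, N1, N2, N3, N4, Z, Prod.mk_zero_zero]
  have S2 := key (LinearMap.prod 0 (LinearMap.prod LinearMap.id 0)) ?_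
  rotate_left
  · rintro x y z (rfl|rfl|rfl|rfl) (rfl|rfl|rfl|rfl) (rfl|rfl|rfl|rfl) <;>
      simp [mul_assoc, mul_neg, neg_mul, neg_neg,
        w12, w13, w14, w23, w24,
        w34, ι_sq', ι_sq_zero, s12, s13, s14,
        s23, s24, s34, B5, B6, B7, B8, N5, N6, N7, N8, Z, Prod.mk_zero_zero]
  have S3 := key (LinearMap.prod 0 (LinearMap.prod 0 LinearMap.id)) ?_
  rotate_left
  · rintro x y z (rfl|rfl|rfl|rfl) (rfl|rfl|rfl|rfl) (rfl|rfl|rfl|rfl) <;>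
      simp [mul_assoc, mul_neg, neg_mul, neg_neg,
        w12, w13, w14, w23, w24,
        w34, ι_sq', ι_sq_zero, s12, s13, s14,
        s23, s24, s34, B9, B10, B11, B12, N9, N10, N11, N12, Z, Prod.mk_zero_zero]
  rintro ⟨y₁, y₂, y₃⟩ ⟨h₁, h₂, h₃⟩
  have h := T.add_mem (T.add_mem (S1 y₁ h₁) (S2 y₂ h₂)) (S3 y₃ h₃)
  simpa using h
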